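/- Let N be a generalised scale on the free monoid F⁺ₘ (2 ≤ m < ∞) with generators a₁,…,aₘ. Then N(aᵢ) = m for every generator aᵢ. -/

import Mathlib

section RightLCMBasics
variable (S : Type*) [Monoid S]

/-- The principal right ideal `sS`. -/
def pIdeal {S : Type*} [Monoid S] (s : S) : Set S := Set.range (fun r => s * r)

/-- `s ⊥ t` : the principal right ideals are disjoint. -/
def Orth {S : Type*} [Monoid S] (s t : S) : Prop := pIdeal s ∩ pIdeal t = ∅

/-- Left cancellativity. -/
def LeftCancellative : Prop := ∀ a b c : S, a * b = a * c → b = c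

/-- Right LCM property: intersections of principal right ideals are empty or principal. -/
def IsRightLCM : Prop :=
  ∀ s t : S, pIdeal s ∩ pIdeal t = ∅ ∨ ∃ r : S, pIdeal s ∩ pIdeal t = pIdeal r

/-- The core subsemigroup `S_c`. -/
def core : Set S := {a | ∀ s : S, ¬ Orth a s}

/-- The core relation `s ∼ t` : `sa = tb` for some core elements `a, b`. -/
def coreRel {S : Type*} [Monoid S] (s t : S) : Prop :=
  ∃ a ∈ core S, ∃ b ∈ core S, s * a = t * b

/-- A (finite) foundation set. -/
def IsFoundationSet {S : Type*} [Monoid S] (F : Set S) : Prop :=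
  F.Finite ∧ ∀ s : S, ∃ f ∈ F, ¬ Orth f s

/-- Accuracy: distinct elements are mutually orthogonal. -/
def Accurate {S : Type*} [Monoid S] (F : Set S) : Prop :=
  ∀ f ∈ F, ∀ g ∈ F, f ≠ g → Orth f g

/-- Property (AR): every foundation set admits an accurate refinement. -/
def HasAR : Prop :=
  ∀ F : Set S, IsFoundationSet F →
    ∃ F' : Set S, IsFoundationSet F' ∧ Accurate F' ∧
      F' ⊆ {x | ∃ f ∈ F, ∃ r : S, x = f * r}

end RightLCMBasics

/-- A minimal complete set (transversal) of representatives for `N⁻¹(n)/∼`. -/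
def IsTransversal {S : Type*} [Monoid S] (N : S →* ℕ) (n : ℕ) (T : Set S) : Prop :=
  (∀ t ∈ T, N t = n) ∧ (∀ s : S, N s = n → ∃ t ∈ T, coreRel s t) ∧
  (∀ t ∈ T, ∀ t' ∈ T, coreRel t t' → t = t')

/-- A generalised scale: a nontrivial homomorphism into `(ℕ₊, ·)` such that `N⁻¹(n)/∼`
has exactly `n` elements and every minimal complete set of representatives of
`N⁻¹(n)/∼` is an accurate foundation set, for every `n` in the image of `N`. -/
def IsGenScale {S : Type*} [Monoid S] (N : S →* ℕ) : Prop :=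
  (∀ s : S, N s ≠ 0) ∧ (∃ s : S, N s ≠ 1) ∧
  ∀ n ∈ Set.range N,
    (∃ T : Set S, IsTransversal N n T ∧ T.Finite ∧ T.ncard = n) ∧
    (∀ T : Set S, IsTransversal N n T → Accurate T ∧ IsFoundationSet T)

section Aux
variable {m : ℕ}

lemma not_orth_one {S : Type*} [Monoid S] (s : S) : ¬ Orth 1 s := by
  intro h
  have hs : s ∈ pIdeal (1 : S) ∩ pIdeal s := ⟨⟨s, one_mul s⟩, ⟨1, mul_one s⟩⟩
  rw [Orth] at h
  rw [h] at hs
  exact hs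

lemma one_mem_core {S : Type*} [Monoid S] : (1 : S) ∈ core S := fun s => not_orth_one s

lemma orth_of_head_ne {s t : FreeMonoid (Fin m)} {i j : Fin m} {ls lt : List (Fin m)}
    (hs : FreeMonoid.toList s = i :: ls) (ht : FreeMonoid.toList t = j :: lt)
    (hij : i ≠ j) : Orth s t := by
  rw [Orth, Set.eq_empty_iff_forall_notMem]
  rintro x ⟨⟨r, hr⟩, ⟨r', hr'⟩⟩
  have h := congrArg FreeMonoid.toList (hr.trans hr'.symm)
  simp only [FreeMonoid.toList_mul, hs, ht, List.cons_append, List.cons.injEq] at h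
  exact hij h.1

lemma orth_of_of {i j : Fin m} (hij : i ≠ j) :
    Orth (FreeMonoid.of i) (FreeMonoid.of j) :=
  orth_of_head_ne (ls := []) (lt := []) rfl rfl hij

lemma core_trivial (hm : 2 ≤ m) {c : FreeMonoid (Fin m)} (hc : c ∈ core (FreeMonoid (Fin m))) :
    c = 1 := by
  rcases hl : FreeMonoid.toList c with _ | ⟨i, l⟩
  · have := congrArg FreeMonoid.ofList hl
    rwa [FreeMonoid.ofList_toList] at this
  · have hcard : 1 < Fintype.card (Fin m) := by rw [Fintype.card_fin]; omega
    obtain ⟨j, hj⟩ := Fintype.exists_ne_of_one_lt_card hcard i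
    exact absurd (orth_of_head_ne (lt := []) hl rfl (fun h => hj h.symm))
      (hc (FreeMonoid.of j))

lemma coreRel_eq (hm : 2 ≤ m) {s t : FreeMonoid (Fin m)} (h : coreRel s t) : s = t := by
  obtain ⟨a, ha, b, hb, hab⟩ := h
  rw [core_trivial hm ha, mul_one, core_trivial hm hb, mul_one] at hab
  exact hab

lemma transversal_preimage (hm : 2 ≤ m) (N : FreeMonoid (Fin m) →* ℕ) (n : ℕ) :
    IsTransversal N n (N ⁻¹' {n}) :=
  ⟨fun _ ht => ht, fun s hs => ⟨s, hs, 1, one_mem_core, 1, one_mem_core, rfl⟩,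
   fun _ _ _ _ h => coreRel_eq hm h⟩

lemma preimage_eq_of_transversal (hm : 2 ≤ m) {N : FreeMonoid (Fin m) →* ℕ} {n : ℕ}
    {T : Set (FreeMonoid (Fin m))} (hT : IsTransversal N n T) : N ⁻¹' {n} = T := by
  ext s
  constructor
  · intro hs
    obtain ⟨t, htT, hrel⟩ := hT.2.1 s hs
    rwa [coreRel_eq hm hrel]
  · intro hs
    exact hT.1 s hs

end Aux

/-- Any generalised scale on the free monoid on `2 ≤ m < ∞` generators sends each
generator to `m`. -/
theorem gen_scale_on_generators (m : ℕ) (hm : 2 ≤ m)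
    (N : FreeMonoid (Fin m) →* ℕ) (hN : IsGenScale N) :
    ∀ i : Fin m, N (FreeMonoid.of i) = m := by
  classical
  obtain ⟨hN0, -, hN2⟩ := hN
  set f : Fin m → ℕ := fun j => N (FreeMonoid.of j) with hf
  have key : ∀ n ∈ Set.range N,
      (N ⁻¹' {n}).ncard = n ∧ Accurate (N ⁻¹' {n}) ∧ IsFoundationSet (N ⁻¹' {n}) := by
    intro n hn
    obtain ⟨⟨T, hT, _, hTcard⟩, hAll⟩ := hN2 n hn
    have hpre := preimage_eq_of_transversal hm hT
    have h2 := hAll _ (transversal_preimage hm N n)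
    exact ⟨by rw [hpre]; exact hTcard, h2.1, h2.2⟩
  have hf2 : ∀ j, 2 ≤ f j := by
    intro j
    by_contra h
    push_neg at h
    have hj1 : f j = 1 := by
      have h0 : f j ≠ 0 := hN0 (FreeMonoid.of j)
      omega
    obtain ⟨-, hAcc, -⟩ := key 1 ⟨1, map_one N⟩
    have hone : (1 : FreeMonoid (Fin m)) ∈ N ⁻¹' {1} := by
      simp [Set.mem_preimage, map_one]
    have hjmem : FreeMonoid.of j ∈ N ⁻¹' {1} := hj1
    have hne : (1 : FreeMonoid (Fin m)) ≠ FreeMonoid.of j := by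
      intro h
      exact absurd (congrArg FreeMonoid.toList h) (by simp)
    exact not_orth_one _ (hAcc 1 hone (FreeMonoid.of j) hjmem hne)
  have : Nonempty (Fin m) := ⟨⟨0, by omega⟩⟩
  obtain ⟨j0, hj0⟩ := Finite.exists_min f
  set n := f j0 with hn
  obtain ⟨hcard, -, hFound⟩ := key n ⟨FreeMonoid.of j0, rfl⟩
  have hn2 : 2 ≤ n := hf2 j0
  have hsub : ∀ w ∈ N ⁻¹' {n}, ∃ j, w = FreeMonoid.of j := by
    intro w hw
    have hw' : N w = n := hw
    rcases hl : FreeMonoid.toList w with _ | ⟨a, l⟩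
    · exfalso
      have hw1 : w = 1 := by
        have := congrArg FreeMonoid.ofList hl
        rwa [FreeMonoid.ofList_toList] at this
      rw [hw1, map_one] at hw'
      omega
    · have hwe : w = FreeMonoid.ofList (a :: l) := by
        have := congrArg FreeMonoid.ofList hl
        rwa [FreeMonoid.ofList_toList] at this
      rcases l with _ | ⟨b, l'⟩
      · exact ⟨a, by rw [hwe]; rfl⟩
      · exfalso
        rw [hwe, FreeMonoid.ofList_cons, FreeMonoid.ofList_cons, map_mul, map_mul] at hw'
        have ha : n ≤ f a := hj0 a
        have hb : n ≤ f b := hj0 b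
        have hc : 1 ≤ N (FreeMonoid.ofList l') :=
          Nat.one_le_iff_ne_zero.mpr (hN0 _)
        have : n * n ≤ f a * (f b * N (FreeMonoid.ofList l')) :=
          Nat.mul_le_mul ha (le_trans (by simpa using hb)
            (Nat.le_mul_of_pos_right _ hc))
        rw [hw'] at this
        nlinarith
  have hofmem : ∀ k, FreeMonoid.of k ∈ N ⁻¹' {n} := by
    intro k
    obtain ⟨g, hg, hgo⟩ := hFound.2 (FreeMonoid.of k)
    obtain ⟨j, rfl⟩ := hsub g hg
    have hjk : j = k := by
      by_contra h
      exact hgo (orth_of_of h)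
    rw [← hjk]
    exact hg
  have hpre_eq : N ⁻¹' {n} = Set.range (FreeMonoid.of : Fin m → FreeMonoid (Fin m)) := by
    ext w
    constructor
    · intro hw
      obtain ⟨j, rfl⟩ := hsub w hw
      exact ⟨j, rfl⟩
    · rintro ⟨k, rfl⟩
      exact hofmem k
  have hnm : n = m := by
    rw [hpre_eq] at hcard
    rw [← Nat.card_coe_set_eq, Nat.card_range_of_injective FreeMonoid.of_injective,
      Nat.card_eq_fintype_card, Fintype.card_fin] at hcard
    omega
  intro i
  have := hofmem i
  simp only [Set.mem_preimage, Set.mem_singleton_iff] at this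
  rw [this, hnm]
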